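/- Let F be a field, n ≥ k ≥ 1, A an n×n matrix and B a k×k matrix over F, and let T be the linear map on M_{n×k}(F) defined by T(X) = AXB. Then det_{n,k}(T(X)) = det_{n,k}(X) for all n×k matrices X over F if and only if det_{n,k}(A(|d]) · det(B) = sgn(d) for every k-element subset d of {1,...,n}. -/
import Mathlib

open Classical in
noncomputable def cullisDet {F : Type*} [Field F] {n k : ℕ}
    (X : Matrix (Fin n) (Fin k) F) : F :=
  ∑ f : Fin k → Fin n, if StrictMono f then
    (-1 : F) ^ (∑ j : Fin k, ((f j : ℕ) - (j : ℕ))) * (X.submatrix f id).det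
  else 0

open Classical Finset

section Aux

variable {F : Type*} [Field F] {n k : ℕ}

lemma strictMono_coe_le {f : Fin k → Fin n} (hf : StrictMono f) :
    ∀ (m : ℕ) (h : m < k), m ≤ (f ⟨m, h⟩ : ℕ) := by
  intro m
  induction m with
  | zero => intro h; exact Nat.zero_le _
  | succ m ih =>
    intro h
    have h' : m < k := Nat.lt_of_succ_lt h
    have hlt : f ⟨m, h'⟩ < f ⟨m + 1, h⟩ := hf (by simp [Fin.lt_def])
    have := ih h'
    have := Fin.lt_def.mp hlt
    omega

lemma strictMono_le_apply {f : Fin k → Fin n} (hf : StrictMono f) (j : Fin k) :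
    (j : ℕ) ≤ (f j : ℕ) := strictMono_coe_le hf j.1 j.2

lemma sum_sub_eq {f : Fin k → Fin n} (hf : StrictMono f) :
    ∑ j : Fin k, ((f j : ℕ) - (j : ℕ))
      = (∑ j : Fin k, (f j : ℕ)) - ∑ j : Fin k, (j : ℕ) :=
  Finset.sum_tsub_distrib _ fun j _ => strictMono_le_apply hf j

lemma sum_coe_orderEmb (d : Finset (Fin n)) (hd : d.card = k) :
    ∑ j : Fin k, ((d.orderEmbOfFin hd j : Fin n) : ℕ) = ∑ i ∈ d, (i : ℕ) := by
  refine Finset.sum_bij (fun j _ => d.orderEmbOfFin hd j) ?_ ?_ ?_ ?_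
  · intro j _; exact d.orderEmbOfFin_mem hd j
  · intro a _ b _ hab; exact (d.orderEmbOfFin hd).injective hab
  · intro i hi
    have hr : (i : Fin n) ∈ Set.range (d.orderEmbOfFin hd) := by
      rw [Finset.range_orderEmbOfFin]; exact hi
    obtain ⟨j, hj⟩ := hr
    exact ⟨j, Finset.mem_univ _, hj⟩
  · intro j _; rfl

/-- Expansion of the determinant of a rectangular product along column choices. -/
lemma det_mul_expand (M : Matrix (Fin k) (Fin n) F) (X : Matrix (Fin n) (Fin k) F) :
    (M * X).det = ∑ g : Fin k → Fin n, (∏ j, X (g j) j) * (M.submatrix id g).det := by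
  have h : (M * X).det = ∑ g : Fin k → Fin n, ∑ σ : Equiv.Perm (Fin k),
      ((Equiv.Perm.sign σ : ℤ) : F) * ∏ i, M (σ i) (g i) * X (g i) i := by
    simp only [Matrix.det_apply', Matrix.mul_apply, Finset.prod_univ_sum, Finset.mul_sum,
      Fintype.piFinset_univ]
    rw [Finset.sum_comm]
  rw [h]
  refine Finset.sum_congr rfl fun g _ => ?_
  rw [Matrix.det_apply', Finset.mul_sum]
  refine Finset.sum_congr rfl fun σ _ => ?_
  simp only [Matrix.submatrix_apply, id_eq]
  rw [Finset.prod_mul_distrib]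
  ring

lemma cullisDet_mul_left (A : Matrix (Fin n) (Fin n) F) (X : Matrix (Fin n) (Fin k) F) :
    cullisDet (A * X)
      = ∑ g : Fin k → Fin n, (∏ j, X (g j) j) * cullisDet (A.submatrix id g) := by
  unfold cullisDet
  have key : ∀ f : Fin k → Fin n,
      (if StrictMono f then
        (-1 : F) ^ (∑ j : Fin k, ((f j : ℕ) - (j : ℕ))) * (((A * X)).submatrix f id).det
      else 0)
      = ∑ g : Fin k → Fin n, (∏ j, X (g j) j) *
          (if StrictMono f then
            (-1 : F) ^ (∑ j : Fin k, ((f j : ℕ) - (j : ℕ))) *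
              (((A.submatrix id g)).submatrix f id).det
          else 0) := by
    intro f
    by_cases hf : StrictMono f
    · simp only [if_pos hf]
      have h1 : (A * X).submatrix f id = (A.submatrix f id) * X := by
        ext i j; simp [Matrix.mul_apply]
      rw [h1, det_mul_expand, Finset.mul_sum]
      refine Finset.sum_congr rfl fun g _ => ?_
      have h2 : (A.submatrix f id).submatrix id g = (A.submatrix id g).submatrix f id := by
        ext i j; simp
      rw [h2]; ring
    · simp only [if_neg hf, mul_zero, Finset.sum_const_zero]
  rw [Finset.sum_congr rfl fun f _ => key f, Finset.sum_comm]
  exact Finset.sum_congr rfl fun g _ => (Finset.mul_sum _ _ _).symm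

lemma cullisDet_mul_right (Y : Matrix (Fin n) (Fin k) F) (B : Matrix (Fin k) (Fin k) F) :
    cullisDet (Y * B) = cullisDet Y * B.det := by
  unfold cullisDet
  rw [Finset.sum_mul]
  refine Finset.sum_congr rfl fun f _ => ?_
  by_cases hf : StrictMono f
  · simp only [if_pos hf]
    have h1 : (Y * B).submatrix f id = (Y.submatrix f id) * B := by
      ext i j; simp [Matrix.mul_apply]
    rw [h1, Matrix.det_mul]; ring
  · simp only [if_neg hf, zero_mul]

lemma cullisDet_eq_zero_of_column_eq (M : Matrix (Fin n) (Fin k) F) {j j' : Fin k}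
    (hjj : j ≠ j') (h : ∀ i, M i j = M i j') : cullisDet M = 0 := by
  unfold cullisDet
  refine Finset.sum_eq_zero fun f _ => ?_
  by_cases hf : StrictMono f
  · simp only [if_pos hf]
    have hz : (M.submatrix f id).det = 0 :=
      Matrix.det_zero_of_column_eq hjj fun i => h (f i)
    rw [hz, mul_zero]
  · simp only [if_neg hf]

lemma cullisDet_submatrix_perm (M : Matrix (Fin n) (Fin k) F) (σ : Equiv.Perm (Fin k)) :
    cullisDet (M.submatrix id σ)
      = ((Equiv.Perm.sign σ : ℤ) : F) * cullisDet M := by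
  unfold cullisDet
  rw [Finset.mul_sum]
  refine Finset.sum_congr rfl fun f _ => ?_
  by_cases hf : StrictMono f
  · simp only [if_pos hf]
    have h1 : (M.submatrix id σ).submatrix f id = (M.submatrix f id).submatrix id σ := by
      ext i j; simp
    rw [h1, Matrix.det_permute']
    ring
  · simp only [if_neg hf, mul_zero]

lemma strictMono_eq_of_image_eq {f g : Fin k → Fin n} (hf : StrictMono f) (hg : StrictMono g)
    (h : Finset.univ.image f = Finset.univ.image g) : f = g := by
  have hcard : (Finset.univ.image g).card = k := by
    rw [Finset.card_image_of_injective _ hg.injective, Finset.card_univ, Fintype.card_fin]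
  have h1 : f = (Finset.univ.image g).orderEmbOfFin hcard := by
    refine Finset.orderEmbOfFin_unique hcard (fun x => ?_) hf
    rw [← h]; exact Finset.mem_image_of_mem f (Finset.mem_univ x)
  have h2 : g = (Finset.univ.image g).orderEmbOfFin hcard := by
    refine Finset.orderEmbOfFin_unique hcard (fun x => ?_) hg
    exact Finset.mem_image_of_mem g (Finset.mem_univ x)
  exact h1.trans h2.symm

lemma det_one_submatrix (f g : Fin k → Fin n) (hf : StrictMono f) (hg : StrictMono g) :
    ((1 : Matrix (Fin n) (Fin n) F).submatrix f g).det = if f = g then 1 else 0 := by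
  split_ifs with h
  · subst h
    rw [Matrix.submatrix_one f hf.injective, Matrix.det_one]
  · have hex : ∃ i, f i ∉ Finset.univ.image g := by
      by_contra hc
      push_neg at hc
      have hsub : Finset.univ.image f ⊆ Finset.univ.image g := by
        intro x hx
        obtain ⟨i, _, rfl⟩ := Finset.mem_image.mp hx
        exact hc i
      have hcf : (Finset.univ.image f).card = k := by
        rw [Finset.card_image_of_injective _ hf.injective, Finset.card_univ, Fintype.card_fin]
      have hcg : (Finset.univ.image g).card = k := by
        rw [Finset.card_image_of_injective _ hg.injective, Finset.card_univ, Fintype.card_fin]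
      have := Finset.eq_of_subset_of_card_le hsub (by rw [hcf, hcg])
      exact h (strictMono_eq_of_image_eq hf hg this)
    obtain ⟨i, hi⟩ := hex
    refine Matrix.det_eq_zero_of_row_eq_zero i fun j => ?_
    simp only [Matrix.submatrix_apply, Matrix.one_apply]
    rw [if_neg]
    exact fun hij => hi (Finset.mem_image.mpr ⟨j, Finset.mem_univ _, hij.symm⟩)

lemma cullisDet_one_submatrix {g : Fin k → Fin n} (hg : StrictMono g) :
    cullisDet ((1 : Matrix (Fin n) (Fin n) F).submatrix id g)
      = (-1 : F) ^ (∑ j : Fin k, ((g j : ℕ) - (j : ℕ))) := by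
  unfold cullisDet
  rw [Finset.sum_eq_single g]
  · simp only [if_pos hg]
    have h1 : ((1 : Matrix (Fin n) (Fin n) F).submatrix id g).submatrix g id
        = (1 : Matrix (Fin n) (Fin n) F).submatrix g g := rfl
    rw [h1, Matrix.submatrix_one g hg.injective, Matrix.det_one, mul_one]
  · intro f _ hfg
    by_cases hf : StrictMono f
    · simp only [if_pos hf]
      have h1 : ((1 : Matrix (Fin n) (Fin n) F).submatrix id g).submatrix f id
          = (1 : Matrix (Fin n) (Fin n) F).submatrix f g := rfl
      rw [h1, det_one_submatrix f g hf hg, if_neg hfg, mul_zero]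
    · simp only [if_neg hf]
  · intro hg'; exact absurd (Finset.mem_univ g) hg'

lemma prod_ite_indicator (g g₀ : Fin k → Fin n) :
    (∏ j, (if g j = g₀ j then (1 : F) else 0)) = if g = g₀ then 1 else 0 := by
  split_ifs with h
  · subst h; simp
  · obtain ⟨j, hj⟩ := Function.ne_iff.mp h
    exact Finset.prod_eq_zero (Finset.mem_univ j) (if_neg hj)

end Aux

/-- Lemma 2.18: a two-sided multiplication `X ↦ AXB` preserves the Cullis
determinant iff `det_{n,k}(A(|d]) ⬝ det(B) = sgn(d)` for every `k`-subset
`d` of rows. -/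
theorem stmt19 {F : Type*} [Field F] {n k : ℕ} (hk : 1 ≤ k) (hkn : k ≤ n)
    (A : Matrix (Fin n) (Fin n) F) (B : Matrix (Fin k) (Fin k) F) :
    (∀ X : Matrix (Fin n) (Fin k) F, cullisDet (A * X * B) = cullisDet X) ↔
      ∀ (d : Finset (Fin n)) (hd : d.card = k),
        cullisDet (A.submatrix id (fun j => d.orderEmbOfFin hd j)) * B.det =
          (-1 : F) ^ ((∑ i ∈ d, (i : ℕ)) - ∑ j : Fin k, (j : ℕ)) := by
  have expandA : ∀ X : Matrix (Fin n) (Fin k) F, cullisDet (A * X * B)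
      = ∑ g : Fin k → Fin n, (∏ j, X (g j) j) * (cullisDet (A.submatrix id g) * B.det) := by
    intro X
    rw [cullisDet_mul_right, cullisDet_mul_left, Finset.sum_mul]
    exact Finset.sum_congr rfl fun g _ => by ring
  have expandI : ∀ X : Matrix (Fin n) (Fin k) F, cullisDet X
      = ∑ g : Fin k → Fin n, (∏ j, X (g j) j) *
          cullisDet ((1 : Matrix (Fin n) (Fin n) F).submatrix id g) := by
    intro X
    conv_lhs => rw [← Matrix.one_mul X]
    rw [cullisDet_mul_left]
  have step1 : (∀ X : Matrix (Fin n) (Fin k) F, cullisDet (A * X * B) = cullisDet X) ↔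
      ∀ g : Fin k → Fin n, cullisDet (A.submatrix id g) * B.det
        = cullisDet ((1 : Matrix (Fin n) (Fin n) F).submatrix id g) := by
    constructor
    · intro h g
      have hX := h (Matrix.of fun i j => if i = g j then (1 : F) else 0)
      rw [expandA, expandI] at hX
      have heval : ∀ c : (Fin k → Fin n) → F,
          (∑ g' : Fin k → Fin n,
            (∏ j, (Matrix.of fun i j => if i = g j then (1 : F) else 0) (g' j) j) * c g')
          = c g := by
        intro c
        have : ∀ g' : Fin k → Fin n,
            (∏ j, (Matrix.of fun i j => if i = g j then (1 : F) else 0) (g' j) j) * c g'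
            = if g' = g then c g' else 0 := by
          intro g'
          simp only [Matrix.of_apply]
          rw [prod_ite_indicator g' g]
          split_ifs <;> simp
        rw [Finset.sum_congr rfl fun g' _ => this g']
        simp
      rw [heval, heval] at hX
      exact hX
    · intro h X
      rw [expandA, expandI]
      exact Finset.sum_congr rfl fun g _ => by rw [h g]
  rw [step1]
  constructor
  · intro h d hd
    have hg : StrictMono fun j => d.orderEmbOfFin hd j := (d.orderEmbOfFin hd).strictMono
    rw [h _, cullisDet_one_submatrix hg]
    congr 1
    rw [sum_sub_eq hg, sum_coe_orderEmb d hd]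
  · intro h g
    by_cases hinj : Function.Injective g
    · have hd : (Finset.univ.image g).card = k := by
        rw [Finset.card_image_of_injective _ hinj, Finset.card_univ, Fintype.card_fin]
      set d : Finset (Fin n) := Finset.univ.image g with hdd
      set g₀ : Fin k → Fin n := fun j => d.orderEmbOfFin hd j with hg₀d
      have hg₀ : StrictMono g₀ := (d.orderEmbOfFin hd).strictMono
      have hmem : ∀ j, g j ∈ d := fun j => Finset.mem_image_of_mem g (Finset.mem_univ j)
      have hsurj : ∀ j, ∃ j', g₀ j' = g j := by
        intro j
        have hr : g j ∈ Set.range (d.orderEmbOfFin hd) := by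
          rw [Finset.range_orderEmbOfFin]; exact hmem j
        obtain ⟨j', hj'⟩ := hr
        exact ⟨j', hj'⟩
      choose σf hσf using hsurj
      have hσinj : Function.Injective σf := fun a b hab =>
        hinj (by rw [← hσf a, ← hσf b, hab])
      let σ : Equiv.Perm (Fin k) := Equiv.ofBijective σf
        ((Finite.injective_iff_bijective).mp hσinj)
      have hcomp : ∀ j, g j = g₀ (σ j) := fun j => (hσf j).symm
      have hA : A.submatrix id g = (A.submatrix id g₀).submatrix id σ := by
        ext i j
        simp only [Matrix.submatrix_apply, id_eq]
        rw [hcomp j]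
      have hI : (1 : Matrix (Fin n) (Fin n) F).submatrix id g
          = ((1 : Matrix (Fin n) (Fin n) F).submatrix id g₀).submatrix id σ := by
        ext i j
        simp only [Matrix.submatrix_apply, id_eq]
        rw [hcomp j]
      have hkey : cullisDet (A.submatrix id g₀) * B.det
          = cullisDet ((1 : Matrix (Fin n) (Fin n) F).submatrix id g₀) := by
        rw [cullisDet_one_submatrix hg₀, h d hd]
        congr 1
        rw [sum_sub_eq hg₀, sum_coe_orderEmb d hd]
      rw [hA, hI, cullisDet_submatrix_perm, cullisDet_submatrix_perm, mul_assoc, hkey]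
    · have hne : ∃ j j', g j = g j' ∧ j ≠ j' := by
        unfold Function.Injective at hinj
        push_neg at hinj
        obtain ⟨a, b, hab, hne⟩ := hinj
        exact ⟨a, b, hab, hne⟩
      obtain ⟨j, j', heq, hjj⟩ := hne
      rw [cullisDet_eq_zero_of_column_eq (A.submatrix id g) hjj
          (fun i => by simp [heq]),
        cullisDet_eq_zero_of_column_eq ((1 : Matrix (Fin n) (Fin n) F).submatrix id g) hjj
          (fun i => by simp only [Matrix.submatrix_apply]; rw [heq]),
        zero_mul]
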